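/- arXiv:1803.06070 — 3 statements merged into one kernel-verified Lean document; each statement's English description precedes it below -/
import Mathlib

section
/- The measure ρ on (0,∞)^p is absolutely continuous with respect to Lebesgue measure, with density f(w₁,…,w_p) = ∫_0^∞ w₀^{−p} ∏_{k=1}^p [ b_k^{a_k} (w_k/w₀)^{a_k−1} e^{−b_k w_k/w₀} / Γ(a_k) ] · w₀^{−1−σ} e^{−τ w₀} / Γ(1−σ) dw₀ for (w₁,…,w_p) ∈ (0,∞)^p. -/
open MeasureTheory Real Filter
open Set
open scoped ENNReal


theorem RhoAux.lintegral_pi_prod' {p : ℕ} (μ : Fin p → Measure ℝ) [∀ i, SigmaFinite (μ i)]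
    (F : Fin p → ℝ → ℝ≥0∞) (hF : ∀ i, Measurable (F i)) :
    ∫⁻ x, ∏ i, F i (x i) ∂Measure.pi μ = ∏ i, ∫⁻ y, F i y ∂μ i := by
  classical
  have hmeas : Measurable fun x : Fin p → ℝ => ∏ i, F i (x i) :=
    Finset.measurable_prod _ fun i _ => (hF i).comp (measurable_pi_apply i)
  have key : ∀ (s : Finset (Fin p)) (x : Fin p → ℝ),
      (∫⋯∫⁻_s, (fun y => ∏ i, F i (y i)) ∂μ) x
        = (∏ i ∈ s, ∫⁻ y, F i y ∂μ i) * ∏ i ∈ sᶜ, F i (x i) := by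
    intro s
    induction s using Finset.induction with
    | empty => intro x; simp [lmarginal_empty]
    | @insert i s hi ih =>
      intro x
      rw [lmarginal_insert _ hmeas hi]
      have h1 : ∀ t : ℝ,
          (∫⋯∫⁻_s, (fun y => ∏ i, F i (y i)) ∂μ) (Function.update x i t)
            = ((∏ j ∈ s, ∫⁻ y, F j y ∂μ j) * ∏ j ∈ sᶜ.erase i, F j (x j)) * F i t := by
        intro t
        rw [ih]
        have hi' : i ∈ sᶜ := Finset.mem_compl.2 hi
        rw [← Finset.mul_prod_erase sᶜ _ hi']
        have : ∏ j ∈ sᶜ.erase i, F j (Function.update x i t j)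
            = ∏ j ∈ sᶜ.erase i, F j (x j) :=
          Finset.prod_congr rfl fun j hj => by
            rw [Function.update_of_ne (Finset.ne_of_mem_erase hj)]
        rw [Function.update_self, this]
        ring
      simp_rw [h1]
      rw [lintegral_const_mul _ (hF i)]
      rw [Finset.prod_insert hi, Finset.compl_insert]
      ring
  have x0 : Fin p → ℝ := fun _ => 0
  rw [lintegral_eq_lmarginal_univ (fun _ => (0:ℝ)), key]
  simp

theorem RhoAux.pi_wd {p : ℕ} (μ : Fin p → Measure ℝ) [∀ i, SigmaFinite (μ i)]
    (F : Fin p → ℝ → ℝ≥0∞) (hF : ∀ i, Measurable (F i))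
    [∀ i, SigmaFinite ((μ i).withDensity (F i))] :
    Measure.pi (fun i => (μ i).withDensity (F i))
      = (Measure.pi μ).withDensity fun x => ∏ i, F i (x i) := by
  refine Measure.pi_eq fun s hs => ?_
  rw [withDensity_apply _ (MeasurableSet.univ_pi hs), ← lintegral_indicator (MeasurableSet.univ_pi hs)]
  have hind : ∀ x : Fin p → ℝ, (Set.univ.pi s).indicator (fun x => ∏ i, F i (x i)) x
      = ∏ i, (s i).indicator (F i) (x i) := by
    intro x
    by_cases hx : x ∈ Set.univ.pi s
    · rw [Set.indicator_of_mem hx]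
      exact Finset.prod_congr rfl fun i _ =>
        (Set.indicator_of_mem (hx i (Set.mem_univ i)) _).symm
    · rw [Set.indicator_of_notMem hx]
      have : ∃ i, x i ∉ s i := by
        by_contra h
        push_neg at h
        exact hx (Set.mem_univ_pi.2 h)
      obtain ⟨i, hxi⟩ := this
      exact (Finset.prod_eq_zero (Finset.mem_univ i)
        (Set.indicator_of_notMem hxi _)).symm
  simp_rw [hind]
  rw [RhoAux.lintegral_pi_prod' μ _ (fun i => (hF i).indicator (hs i))]
  exact Finset.prod_congr rfl fun i _ => by
    rw [lintegral_indicator (hs i), withDensity_apply _ (hs i)]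

theorem RhoAux.pi_restrict (p : ℕ) :
    Measure.pi (fun _ : Fin p => (volume : Measure ℝ).restrict (Set.Ioi 0))
      = (volume : Measure (Fin p → ℝ)).restrict (Set.univ.pi fun _ => Set.Ioi 0) := by
  refine Measure.pi_eq fun s hs => ?_
  rw [Measure.restrict_apply (MeasurableSet.univ_pi hs), ← Set.pi_inter_distrib, volume_pi_pi]
  exact Finset.prod_congr rfl fun i _ => (Measure.restrict_apply (hs i)).symm

theorem RhoAux.map_smul_restrict (p : ℕ) {w₀ : ℝ} (hw₀ : 0 < w₀) :
    Measure.map (w₀ • · : (Fin p → ℝ) → (Fin p → ℝ))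
        ((volume : Measure (Fin p → ℝ)).restrict (Set.univ.pi fun _ => Set.Ioi 0))
      = ENNReal.ofReal ((w₀ ^ p)⁻¹) •
        ((volume : Measure (Fin p → ℝ)).restrict (Set.univ.pi fun _ => Set.Ioi 0)) := by
  have hne : w₀ ≠ 0 := hw₀.ne'
  have hemb : MeasurableEmbedding (w₀ • · : (Fin p → ℝ) → (Fin p → ℝ)) :=
    (Homeomorph.smulOfNeZero w₀ hne).measurableEmbedding
  have hpre : (w₀ • · : (Fin p → ℝ) → (Fin p → ℝ)) ⁻¹' (Set.univ.pi fun _ => Set.Ioi 0)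
      = Set.univ.pi fun _ => Set.Ioi 0 := by
    ext x
    simp only [Set.mem_preimage, Set.mem_univ_pi, Pi.smul_apply, smul_eq_mul, Set.mem_Ioi]
    exact forall_congr' fun i =>
      ⟨fun h => by nlinarith, fun h => mul_pos hw₀ h⟩
  have hfr : Module.finrank ℝ (Fin p → ℝ) = p := by
    rw [Module.finrank_fintype_fun_eq_card, Fintype.card_fin]
  calc Measure.map (w₀ • ·) ((volume : Measure (Fin p → ℝ)).restrict (Set.univ.pi fun _ => Set.Ioi 0))
      = Measure.map (w₀ • ·) ((volume : Measure (Fin p → ℝ)).restrict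
          ((w₀ • · : (Fin p → ℝ) → (Fin p → ℝ)) ⁻¹' (Set.univ.pi fun _ => Set.Ioi 0))) := by
        rw [hpre]
    _ = (Measure.map (w₀ • ·) (volume : Measure (Fin p → ℝ))).restrict
          (Set.univ.pi fun _ => Set.Ioi 0) := (hemb.restrict_map _ _).symm
    _ = (ENNReal.ofReal |(w₀ ^ Module.finrank ℝ (Fin p → ℝ))⁻¹| • (volume : Measure (Fin p → ℝ))).restrict
          (Set.univ.pi fun _ => Set.Ioi 0) := by
        rw [Measure.map_addHaar_smul _ hne]
    _ = ENNReal.ofReal ((w₀ ^ p)⁻¹) •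
        ((volume : Measure (Fin p → ℝ)).restrict (Set.univ.pi fun _ => Set.Ioi 0)) := by
        rw [hfr, abs_of_pos (by positivity), Measure.restrict_smul]

theorem RhoAux.aux_int {r c d : ℝ} (hc : 0 < c) (hd : 0 < d) :
    IntegrableOn (fun x : ℝ => x ^ r * Real.exp (-(c / x)) * Real.exp (-(d * x)))
      (Set.Ioi 0) := by
  have hm : Measurable fun x : ℝ => x ^ r * Real.exp (-(c / x)) * Real.exp (-(d * x)) := by
    fun_prop
  set n : ℕ := ⌈|r|⌉₊ with hn
  have hrn : -r ≤ (n : ℝ) := le_trans (neg_le_abs r) (Nat.le_ceil _)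
  have hrn' : r ≤ (n : ℝ) := le_trans (le_abs_self r) (Nat.le_ceil _)
  rw [← Set.Ioc_union_Ioi_eq_Ioi (zero_le_one' ℝ), integrableOn_union]
  constructor
  · -- bounded on (0,1]
    refine Measure.integrableOn_of_bounded (M := (n.factorial : ℝ) / c ^ n)
      (by simp [Real.volume_Ioc]) hm.aestronglyMeasurable ?_
    filter_upwards [ae_restrict_mem measurableSet_Ioc] with x hx
    have hx0 : 0 < x := hx.1
    have key : Real.exp (-(c / x)) ≤ (n.factorial : ℝ) / (c / x) ^ n := by
      have ht : 0 < c / x := div_pos hc hx0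
      have h1 : (c / x) ^ n / (n.factorial : ℝ) ≤ Real.exp (c / x) :=
        Real.pow_div_factorial_le_exp _ ht.le n
      have h2 : 0 < (c / x) ^ n / (n.factorial : ℝ) := by positivity
      rw [Real.exp_neg]
      calc (Real.exp (c / x))⁻¹ ≤ ((c / x) ^ n / (n.factorial : ℝ))⁻¹ := by
            exact inv_anti₀ h2 h1
        _ = (n.factorial : ℝ) / (c / x) ^ n := by rw [inv_div]
    have hb : x ^ r * Real.exp (-(c / x)) * Real.exp (-(d * x))
        ≤ (n.factorial : ℝ) / c ^ n := by
      have e1 : Real.exp (-(d * x)) ≤ 1 := by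
        rw [Real.exp_le_one_iff]; nlinarith
      have e2 : x ^ r * Real.exp (-(c / x)) ≤ (n.factorial : ℝ) / c ^ n := by
        calc x ^ r * Real.exp (-(c / x)) ≤ x ^ r * ((n.factorial : ℝ) / (c / x) ^ n) := by
              exact mul_le_mul_of_nonneg_left key (Real.rpow_nonneg hx0.le r)
          _ = ((n.factorial : ℝ) / c ^ n) * (x ^ r * x ^ (n : ℝ)) := by
              rw [div_pow, Real.rpow_natCast]
              field_simp
          _ = ((n.factorial : ℝ) / c ^ n) * x ^ (r + (n : ℝ)) := by
              rw [← Real.rpow_add hx0]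
          _ ≤ ((n.factorial : ℝ) / c ^ n) * 1 := by
              refine mul_le_mul_of_nonneg_left ?_ (by positivity)
              exact Real.rpow_le_one hx0.le hx.2 (by linarith)
          _ = (n.factorial : ℝ) / c ^ n := mul_one _
      calc x ^ r * Real.exp (-(c / x)) * Real.exp (-(d * x))
          ≤ x ^ r * Real.exp (-(c / x)) * 1 :=
            mul_le_mul_of_nonneg_left e1 (by positivity)
        _ = x ^ r * Real.exp (-(c / x)) := mul_one _
        _ ≤ (n.factorial : ℝ) / c ^ n := e2
    have hnn : 0 ≤ x ^ r * Real.exp (-(c / x)) * Real.exp (-(d * x)) := by positivity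
    rwa [Real.norm_eq_abs, abs_of_nonneg hnn]
  · -- dominated by x^n exp(-dx) on (1,∞)
    have hg : IntegrableOn (fun x : ℝ => x ^ (n : ℝ) * Real.exp (-d * x)) (Set.Ioi 0) := by
      have := integrableOn_rpow_mul_exp_neg_mul_rpow (p := 1) (s := (n : ℝ)) (b := d)
        (lt_of_lt_of_le neg_one_lt_zero (Nat.cast_nonneg n)) one_pos hd
      simpa [Real.rpow_one] using this
    refine Integrable.mono' (hg.mono_set (Set.Ioi_subset_Ioi zero_le_one))
      hm.aestronglyMeasurable ?_
    filter_upwards [ae_restrict_mem measurableSet_Ioi] with x hx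
    have hx1 : (1:ℝ) < x := hx
    have hx0 : 0 < x := lt_trans one_pos hx1
    have hnn : 0 ≤ x ^ r * Real.exp (-(c / x)) * Real.exp (-(d * x)) := by positivity
    rw [Real.norm_eq_abs, abs_of_nonneg hnn]
    have e1 : Real.exp (-(c / x)) ≤ 1 := by
      rw [Real.exp_le_one_iff]
      have : 0 ≤ c / x := by positivity
      linarith
    calc x ^ r * Real.exp (-(c / x)) * Real.exp (-(d * x))
        ≤ x ^ r * 1 * Real.exp (-(d * x)) := by
          refine mul_le_mul_of_nonneg_right ?_ (Real.exp_pos _).le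
          exact mul_le_mul_of_nonneg_left e1 (Real.rpow_nonneg hx0.le r)
      _ = x ^ r * Real.exp (-(d * x)) := by rw [mul_one]
      _ ≤ x ^ (n : ℝ) * Real.exp (-d * x) := by
          rw [neg_mul]
          exact mul_le_mul_of_nonneg_right
            (Real.rpow_le_rpow_of_exponent_le hx1.le hrn') (Real.exp_pos _).le

theorem RhoAux.key_pointwise (σ τ : ℝ) (hσ : σ < 1) (hτ : 0 < τ) (p : ℕ) (hp : 1 ≤ p)
    (a b : Fin p → ℝ) (ha : ∀ k, 0 < a k) (hb : ∀ k, 0 < b k)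
    (w : Fin p → ℝ) (hw : ∀ k, 0 < w k) :
    ∫⁻ w₀ in Set.Ioi (0:ℝ),
        (ENNReal.ofReal (w₀ ^ (-1 - σ) * Real.exp (-τ * w₀) / Real.Gamma (1 - σ))
          * ENNReal.ofReal ((w₀ ^ p)⁻¹)
          * ∏ k, ENNReal.ofReal (b k ^ a k * (w k / w₀) ^ (a k - 1)
              * Real.exp (-(b k) * (w k / w₀)) / Real.Gamma (a k)))
      = ENNReal.ofReal (∫ w₀ in Set.Ioi (0:ℝ),
          w₀ ^ (-(p:ℝ)) *
            (∏ k, (b k) ^ (a k) * (w k / w₀) ^ (a k - 1) *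
              Real.exp (-(b k) * (w k) / w₀) / Real.Gamma (a k)) *
            (w₀ ^ (-1 - σ) * Real.exp (-τ * w₀) / Real.Gamma (1 - σ))) := by
  haveI : Nonempty (Fin p) := ⟨⟨0, hp⟩⟩
  have hΓσ : 0 < Real.Gamma (1 - σ) := Real.Gamma_pos_of_pos (by linarith)
  have hΓ : ∀ k, 0 < Real.Gamma (a k) := fun k => Real.Gamma_pos_of_pos (ha k)
  set φ : ℝ → ℝ := fun w₀ => w₀ ^ (-(p:ℝ)) *
      (∏ k, (b k) ^ (a k) * (w k / w₀) ^ (a k - 1) *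
        Real.exp (-(b k) * (w k) / w₀) / Real.Gamma (a k)) *
      (w₀ ^ (-1 - σ) * Real.exp (-τ * w₀) / Real.Gamma (1 - σ)) with hφ
  set c : ℝ := ∑ k, b k * w k with hcdef
  have hc : 0 < c := Finset.sum_pos (fun k _ => mul_pos (hb k) (hw k)) Finset.univ_nonempty
  set P : ℝ := ∏ k, b k ^ a k * w k ^ (a k - 1) / Real.Gamma (a k) with hPdef
  have hP : 0 ≤ P := Finset.prod_nonneg fun k _ => div_nonneg
    (mul_nonneg (Real.rpow_nonneg (hb k).le _) (Real.rpow_nonneg (hw k).le _)) (hΓ k).le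
  set s : ℝ := ∑ k, (1 - a k) with hsdef
  set r : ℝ := -(p:ℝ) + s + (-1 - σ) with hrdef
  set C : ℝ := P / Real.Gamma (1 - σ) with hCdef
  -- product transformation
  have prod_eq : ∀ x : ℝ, 0 < x →
      (∏ k, (b k) ^ (a k) * (w k / x) ^ (a k - 1) *
        Real.exp (-(b k) * (w k) / x) / Real.Gamma (a k))
      = P * (x ^ s * Real.exp (-(c / x))) := by
    intro x hx
    have step : ∀ k : Fin p,
        (b k) ^ (a k) * (w k / x) ^ (a k - 1) * Real.exp (-(b k) * (w k) / x)
            / Real.Gamma (a k)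
          = (b k ^ a k * w k ^ (a k - 1) / Real.Gamma (a k))
            * (x ^ (1 - a k) * Real.exp (-(b k * w k / x))) := by
      intro k
      have h1 : (w k / x) ^ (a k - 1) = w k ^ (a k - 1) * x ^ (1 - a k) := by
        rw [Real.div_rpow (hw k).le hx.le, show (1 - a k) = -(a k - 1) by ring,
          Real.rpow_neg hx.le, div_eq_mul_inv]
      have h2 : -(b k) * (w k) / x = -(b k * w k / x) := by ring
      rw [h1, h2]
      ring
    rw [Finset.prod_congr rfl fun k _ => step k, Finset.prod_mul_distrib,
      Finset.prod_mul_distrib, ← Real.rpow_sum_of_pos hx, ← Real.exp_sum]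
    have : ∑ k, -(b k * w k / x) = -(c / x) := by
      rw [Finset.sum_neg_distrib, ← Finset.sum_div]
    rw [this]
  -- closed form
  have φeq : ∀ x : ℝ, 0 < x →
      φ x = C * (x ^ r * Real.exp (-(c / x)) * Real.exp (-(τ * x))) := by
    intro x hx
    simp only [hφ]
    rw [prod_eq x hx, hrdef, Real.rpow_add hx, Real.rpow_add hx, neg_mul τ x]
    rw [hCdef]
    field_simp
  have hnn : ∀ x ∈ Set.Ioi (0:ℝ), 0 ≤ φ x := by
    intro x hx
    rw [φeq x hx]
    have hC : 0 ≤ C := div_nonneg hP hΓσ.le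
    have hx0 : (0:ℝ) < x := hx
    exact mul_nonneg hC (mul_nonneg (mul_nonneg (Real.rpow_nonneg hx0.le _)
      (Real.exp_pos _).le) (Real.exp_pos _).le)
  have hint : IntegrableOn φ (Set.Ioi 0) := by
    refine IntegrableOn.congr_fun (f := fun x => C * (x ^ r * Real.exp (-(c / x)) * Real.exp (-(τ * x))))
      ((RhoAux.aux_int hc hτ).const_mul C) (fun x hx => (φeq x hx).symm) measurableSet_Ioi
  rw [ofReal_integral_eq_lintegral_ofReal hint
    ((ae_restrict_iff' measurableSet_Ioi).2 (ae_of_all _ hnn))]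
  refine setLIntegral_congr_fun measurableSet_Ioi (fun x hx => ?_)
  have hx0 : (0:ℝ) < x := hx
  have hA : (0:ℝ) ≤ x ^ (-(p:ℝ)) := Real.rpow_nonneg hx0.le _
  have hterm : ∀ k, 0 ≤ b k ^ a k * (w k / x) ^ (a k - 1)
      * Real.exp (-(b k) * (w k) / x) / Real.Gamma (a k) := fun k =>
    div_nonneg (mul_nonneg (mul_nonneg (Real.rpow_nonneg (hb k).le _)
      (Real.rpow_nonneg (div_nonneg (hw k).le hx0.le) _)) (Real.exp_pos _).le) (hΓ k).le
  have hB : 0 ≤ ∏ k, b k ^ a k * (w k / x) ^ (a k - 1)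
      * Real.exp (-(b k) * (w k) / x) / Real.Gamma (a k) :=
    Finset.prod_nonneg fun k _ => hterm k
  simp only [hφ]
  rw [ENNReal.ofReal_mul (mul_nonneg hA hB), ENNReal.ofReal_mul hA,
    ENNReal.ofReal_prod_of_nonneg (fun k _ => hterm k)]
  have hxp : x ^ (-(p:ℝ)) = ((x ^ p)⁻¹ : ℝ) := by
    rw [Real.rpow_neg hx0.le, Real.rpow_natCast]
  rw [hxp]
  have harg : ∀ k : Fin p, -(b k) * (w k) / x = -(b k) * (w k / x) := fun k =>
    mul_div_assoc _ _ _
  simp_rw [harg]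
  ring

/-- The Lévy measure of a generalized gamma process: the measure on `(0,∞)` with density
`w ↦ w^(-1-σ) * exp(-τ*w) / Γ(1-σ)` with respect to Lebesgue measure. -/
noncomputable def rho0 (σ τ : ℝ) : Measure ℝ :=
  ((volume : Measure ℝ).restrict (Set.Ioi 0)).withDensity
    (fun w => ENNReal.ofReal (w ^ (-1 - σ) * Real.exp (-τ * w) / Real.Gamma (1 - σ)))

/-- The Gamma(a,b) probability measure on `(0,∞)`, with density
`x ↦ b^a x^(a−1) e^(−b x) / Γ(a)` with respect to Lebesgue measure. -/
noncomputable def gammaM (a b : ℝ) : Measure ℝ :=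
  ((volume : Measure ℝ).restrict (Set.Ioi 0)).withDensity
    (fun x => ENNReal.ofReal (b ^ a * x ^ (a - 1) * Real.exp (-b * x) / Real.Gamma a))

/-- The multivariate Lévy measure `ρ` of the compound CRM with independent gamma scores:
the pushforward of `ρ₀ ⊗ Gamma(a₁,b₁) ⊗ ⋯ ⊗ Gamma(a_p,b_p)` under
`(w₀, β₁, …, β_p) ↦ (w₀β₁, …, w₀β_p)`. -/
noncomputable def rhoC (σ τ : ℝ) (p : ℕ) (a b : Fin p → ℝ) : Measure (Fin p → ℝ) :=
  Measure.map (fun x : ℝ × (Fin p → ℝ) => fun k => x.1 * x.2 k)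
    ((rho0 σ τ).prod (Measure.pi fun k => gammaM (a k) (b k)))

/-- The multivariate Lévy measure `ρ` is absolutely continuous with respect to Lebesgue
measure on `(0,∞)^p`, with density
`f(w) = ∫_0^∞ w₀^(−p) ∏_k [b_k^(a_k) (w_k/w₀)^(a_k−1) e^(−b_k w_k/w₀) / Γ(a_k)]
        · w₀^(−1−σ) e^(−τ w₀)/Γ(1−σ) dw₀`. -/
theorem rhoC_density (σ τ : ℝ) (hσ : σ < 1) (hτ : 0 < τ) (p : ℕ) (hp : 1 ≤ p)
    (a b : Fin p → ℝ) (ha : ∀ k, 0 < a k) (hb : ∀ k, 0 < b k) :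
    rhoC σ τ p a b =
      (Measure.pi fun _ : Fin p => ((volume : Measure ℝ).restrict (Set.Ioi 0))).withDensity
        (fun w => ENNReal.ofReal (∫ w₀ in Set.Ioi (0:ℝ),
          w₀ ^ (-(p:ℝ)) *
            (∏ k, (b k) ^ (a k) * (w k / w₀) ^ (a k - 1) *
              Real.exp (-(b k) * (w k) / w₀) / Real.Gamma (a k)) *
            (w₀ ^ (-1 - σ) * Real.exp (-τ * w₀) / Real.Gamma (1 - σ)))) := by
  classical
  haveI : Nonempty (Fin p) := ⟨⟨0, hp⟩⟩
  -- notation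
  set μ0 : Measure ℝ := volume.restrict (Set.Ioi 0) with hμ0def
  set S : Set (Fin p → ℝ) := Set.univ.pi fun _ => Set.Ioi 0 with hSdef
  have hSmeas : MeasurableSet S := MeasurableSet.univ_pi fun _ => measurableSet_Ioi
  set ν : Measure (Fin p → ℝ) := Measure.pi fun _ : Fin p => μ0 with hνdef
  have hν_eq : ν = (volume : Measure (Fin p → ℝ)).restrict S := RhoAux.pi_restrict p
  set f₀ : ℝ → ℝ≥0∞ :=
    fun w => ENNReal.ofReal (w ^ (-1 - σ) * Real.exp (-τ * w) / Real.Gamma (1 - σ)) with hf₀def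
  set F : Fin p → ℝ → ℝ≥0∞ := fun k x =>
    ENNReal.ofReal (b k ^ a k * x ^ (a k - 1) * Real.exp (-(b k) * x) / Real.Gamma (a k)) with hFdef
  have hf₀m : Measurable f₀ := by
    apply Measurable.ennreal_ofReal; fun_prop
  have hFm : ∀ k, Measurable (F k) := fun k => by
    apply Measurable.ennreal_ofReal; fun_prop
  set G : (Fin p → ℝ) → ℝ≥0∞ := fun x => ∏ k, F k (x k) with hGdef
  have hGm : Measurable G := Finset.measurable_prod _ fun k _ =>
    (hFm k).comp (measurable_pi_apply k)
  haveI hsf1 : ∀ k : Fin p, SigmaFinite (μ0.withDensity (F k)) := fun k =>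
    SigmaFinite.withDensity_ofReal _
  haveI hsf2 : SigmaFinite (μ0.withDensity f₀) := SigmaFinite.withDensity_ofReal _
  have hpi : (Measure.pi fun k => gammaM (a k) (b k)) = ν.withDensity G := by
    have h1 : (fun k : Fin p => gammaM (a k) (b k)) = fun k => μ0.withDensity (F k) := rfl
    rw [h1, RhoAux.pi_wd (fun _ => μ0) F hFm]
  set T : ℝ × (Fin p → ℝ) → (Fin p → ℝ) := fun x => fun k => x.1 * x.2 k with hTdef
  have hT : Measurable T := measurable_pi_lambda _ fun k =>
    measurable_fst.mul ((measurable_pi_apply k).comp measurable_snd)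
  set D : (Fin p → ℝ) → ℝ≥0∞ := fun w => ENNReal.ofReal (∫ w₀ in Set.Ioi (0:ℝ),
          w₀ ^ (-(p:ℝ)) *
            (∏ k, (b k) ^ (a k) * (w k / w₀) ^ (a k - 1) *
              Real.exp (-(b k) * (w k) / w₀) / Real.Gamma (a k)) *
            (w₀ ^ (-1 - σ) * Real.exp (-τ * w₀) / Real.Gamma (1 - σ))) with hDdef
  have hmain : rhoC σ τ p a b = Measure.map T ((μ0.withDensity f₀).prod (ν.withDensity G)) := by
    unfold rhoC
    rw [hpi]
    rfl
  rw [hmain]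
  refine Measure.ext fun s hs => ?_
  set ind : (Fin p → ℝ) → ℝ≥0∞ := s.indicator 1 with hinddef
  have hindm : Measurable ind := measurable_one.indicator hs
  rw [Measure.map_apply hT hs, Measure.prod_apply (hT hs)]
  have hsec : ∀ w₀ : ℝ, MeasurableSet (Prod.mk w₀ ⁻¹' (T ⁻¹' s)) := fun w₀ =>
    measurable_prodMk_left (hT hs)
  have step1 : ∀ w₀ : ℝ, (ν.withDensity G) (Prod.mk w₀ ⁻¹' (T ⁻¹' s))
      = ∫⁻ β, G β * ind (fun k => w₀ * β k) ∂ν := by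
    intro w₀
    rw [withDensity_apply _ (hsec w₀), ← lintegral_indicator (hsec w₀)]
    refine lintegral_congr fun β => ?_
    by_cases hβ : (fun k => w₀ * β k) ∈ s
    · rw [Set.indicator_of_mem (show β ∈ Prod.mk w₀ ⁻¹' (T ⁻¹' s) from hβ) G,
        hinddef, Set.indicator_of_mem hβ, Pi.one_apply, mul_one]
    · rw [Set.indicator_of_notMem (show β ∉ Prod.mk w₀ ⁻¹' (T ⁻¹' s) from hβ) G,
        hinddef, Set.indicator_of_notMem hβ, mul_zero]
  rw [lintegral_congr step1]
  have hΨm : Measurable fun w₀ : ℝ => ∫⁻ β, G β * ind (fun k => w₀ * β k) ∂ν := by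
    exact Measurable.lintegral_prod_right
      (f := fun (w₀ : ℝ) (β : Fin p → ℝ) => G β * ind fun k => w₀ * β k)
      ((hGm.comp measurable_snd).mul (hindm.comp hT))
  rw [lintegral_withDensity_eq_lintegral_mul _ hf₀m hΨm]
  -- change of variables in the inner integral, for w₀ > 0
  have hΦm : ∀ w₀ : ℝ, Measurable fun x : Fin p → ℝ => (∏ k, F k (x k / w₀)) * ind x :=
    fun w₀ => (Finset.measurable_prod _ fun k _ =>
      (hFm k).comp (by fun_prop)).mul hindm
  have step2 : ∫⁻ w₀, (f₀ * fun w₀ => ∫⁻ β, G β * ind (fun k => w₀ * β k) ∂ν) w₀ ∂μ0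
      = ∫⁻ w₀, (fun w₀ => ∫⁻ x, (f₀ w₀ * ENNReal.ofReal ((w₀ ^ p)⁻¹))
          * ((∏ k, F k (x k / w₀)) * ind x) ∂ν) w₀ ∂μ0 := by
    refine lintegral_congr_ae ?_
    rw [hμ0def]
    refine (ae_restrict_iff' measurableSet_Ioi).2 (ae_of_all _ fun w₀ hw₀ => ?_)
    have hw₀' : (0:ℝ) < w₀ := hw₀
    simp only [Pi.mul_apply]
    have h1 : ∫⁻ β, G β * ind (fun k => w₀ * β k) ∂ν
        = ENNReal.ofReal ((w₀ ^ p)⁻¹) * ∫⁻ x, (∏ k, F k (x k / w₀)) * ind x ∂ν := by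
      rw [hν_eq]
      calc ∫⁻ β, G β * ind (fun k => w₀ * β k) ∂((volume : Measure (Fin p → ℝ)).restrict S)
          = ∫⁻ β, (fun x => (∏ k, F k (x k / w₀)) * ind x) (w₀ • β)
              ∂((volume : Measure (Fin p → ℝ)).restrict S) := by
            refine lintegral_congr fun β => ?_
            have hcoord : ∀ k : Fin p, (w₀ • β) k / w₀ = β k := fun k => by
              simp only [Pi.smul_apply, smul_eq_mul]
              exact mul_div_cancel_left₀ _ hw₀'.ne'
            simp only [hcoord]
            rfl
        _ = ∫⁻ x, (fun x => (∏ k, F k (x k / w₀)) * ind x) x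
              ∂(Measure.map (w₀ • ·) ((volume : Measure (Fin p → ℝ)).restrict S)) :=
            (lintegral_map (hΦm w₀) (measurable_const_smul w₀)).symm
        _ = ENNReal.ofReal ((w₀ ^ p)⁻¹) * ∫⁻ x, (∏ k, F k (x k / w₀)) * ind x
              ∂((volume : Measure (Fin p → ℝ)).restrict S) := by
            rw [RhoAux.map_smul_restrict p hw₀', lintegral_smul_measure, smul_eq_mul]
    rw [h1, ← mul_assoc, ← lintegral_const_mul _ (hΦm w₀)]
  rw [step2]
  -- swap order of integration
  have hKm : Measurable (Function.uncurry fun (w₀ : ℝ) (x : Fin p → ℝ) =>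
      (f₀ w₀ * ENNReal.ofReal ((w₀ ^ p)⁻¹)) * ((∏ k, F k (x k / w₀)) * ind x)) := by
    apply Measurable.mul
    · exact ((hf₀m.comp measurable_fst).mul
        (((measurable_fst.pow_const p).inv).ennreal_ofReal))
    · refine Measurable.mul ?_ (hindm.comp measurable_snd)
      exact Finset.measurable_prod _ fun k _ =>
        (hFm k).comp (((measurable_pi_apply k).comp measurable_snd).div measurable_fst)
  rw [lintegral_lintegral_swap hKm.aemeasurable]
  -- pull out the indicator and identify the density
  rw [withDensity_apply _ hs, ← lintegral_indicator hs]
  refine lintegral_congr_ae ?_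
  rw [hν_eq]
  refine (ae_restrict_iff' hSmeas).2 (ae_of_all _ fun x hx => ?_)
  have hx' : ∀ k, 0 < x k := fun k => hx k (Set.mem_univ k)
  have hpull : ∫⁻ w₀, (f₀ w₀ * ENNReal.ofReal ((w₀ ^ p)⁻¹)) * ((∏ k, F k (x k / w₀)) * ind x) ∂μ0
      = (∫⁻ w₀, f₀ w₀ * ENNReal.ofReal ((w₀ ^ p)⁻¹) * ∏ k, F k (x k / w₀) ∂μ0) * ind x := by
    calc ∫⁻ w₀, (f₀ w₀ * ENNReal.ofReal ((w₀ ^ p)⁻¹)) * ((∏ k, F k (x k / w₀)) * ind x) ∂μ0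
        = ∫⁻ w₀, (f₀ w₀ * ENNReal.ofReal ((w₀ ^ p)⁻¹) * ∏ k, F k (x k / w₀)) * ind x ∂μ0 :=
          lintegral_congr fun w₀ => by ring
      _ = (∫⁻ w₀, f₀ w₀ * ENNReal.ofReal ((w₀ ^ p)⁻¹) * ∏ k, F k (x k / w₀) ∂μ0) * ind x :=
          lintegral_mul_const _ ((hf₀m.mul ((measurable_id.pow_const p).inv.ennreal_ofReal)).mul
            (Finset.measurable_prod _ fun k _ => (hFm k).comp (measurable_const.div measurable_id)))
  beta_reduce
  rw [hpull]
  by_cases hxs : x ∈ s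
  · rw [hinddef, Set.indicator_of_mem hxs, Set.indicator_of_mem hxs, Pi.one_apply, mul_one]
    exact RhoAux.key_pointwise σ τ hσ hτ p hp a b ha hb x hx'
  · rw [hinddef, Set.indicator_of_notMem hxs, Set.indicator_of_notMem hxs, mul_zero]
end

section
/- For every T > 0, the integral ∫_{(0,∞)^p} ψ(2Tw₁, …, 2Tw_p) ρ(dw₁,…,dw_p) is finite and strictly positive. -/
open MeasureTheory Real Filter ENNReal

/-- The Laplace exponent `ψ(t) = ∫ (1 − e^{−Σ_k t_k v_k}) ρ(dv)` of the compound CRM,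
as a lower integral in `ℝ≥0∞`. -/
noncomputable def psiE (σ τ : ℝ) (p : ℕ) (a b : Fin p → ℝ) (t : Fin p → ℝ) : ℝ≥0∞ :=
  ∫⁻ v, ENNReal.ofReal (1 - Real.exp (-∑ k, t k * v k)) ∂(rhoC σ τ p a b)

/-! ### Auxiliary lemmas -/

lemma ofReal_sum_le' {ι : Type*} (s : Finset ι) (f : ι → ℝ) :
    ENNReal.ofReal (∑ i ∈ s, f i) ≤ ∑ i ∈ s, ENNReal.ofReal (f i) := by
  classical
  induction s using Finset.cons_induction with
  | empty => simp
  | cons a s ha ih =>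
    rw [Finset.sum_cons, Finset.sum_cons]
    exact (ENNReal.ofReal_add_le).trans (add_le_add le_rfl ih)

lemma gammaPDF_Ioi {s r : ℝ} (hs : 0 < s) (hr : 0 < r) :
    ∫⁻ x in Set.Ioi 0, ProbabilityTheory.gammaPDF s r x = 1 := by
  have h1 := ProbabilityTheory.lintegral_gammaPDF_eq_one hs hr
  rw [← lintegral_add_compl (μ := volume) (ProbabilityTheory.gammaPDF s r) measurableSet_Ici,
    Set.compl_Ici, ProbabilityTheory.lintegral_gammaPDF_of_nonpos le_rfl, add_zero,
    ← MeasureTheory.restrict_Ioi_eq_restrict_Ici] at h1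
  exact h1

lemma lint_pow_exp {s r : ℝ} (hs : 0 < s) (hr : 0 < r) :
    ∫⁻ x in Set.Ioi 0, ENNReal.ofReal (x ^ (s - 1) * Real.exp (-(r * x))) =
      ENNReal.ofReal (Real.Gamma s / r ^ s) := by
  have key : ∀ x ∈ Set.Ioi (0:ℝ), ENNReal.ofReal (x ^ (s - 1) * Real.exp (-(r * x))) =
      ENNReal.ofReal (Real.Gamma s / r ^ s) * ProbabilityTheory.gammaPDF s r x := by
    intro x hx
    rw [ProbabilityTheory.gammaPDF_of_nonneg (le_of_lt hx)]
    rw [← ENNReal.ofReal_mul (by positivity)]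
    congr 1
    have h1 : Real.Gamma s ≠ 0 := (Real.Gamma_pos_of_pos hs).ne'
    have h2 : r ^ s ≠ 0 := (Real.rpow_pos_of_pos hr s).ne'
    field_simp
  have hmeas : Measurable (ProbabilityTheory.gammaPDF s r) :=
    (ProbabilityTheory.measurable_gammaPDFReal s r).ennreal_ofReal
  rw [setLIntegral_congr_fun measurableSet_Ioi key,
    lintegral_const_mul _ hmeas, gammaPDF_Ioi hs hr, mul_one]

lemma meas_pow_exp (c r : ℝ) :
    Measurable (fun x : ℝ => ENNReal.ofReal (x ^ c * Real.exp (-(r * x)))) := by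
  fun_prop

lemma gammaM_dens_meas (a b : ℝ) :
    Measurable (fun x : ℝ =>
      ENNReal.ofReal (b ^ a * x ^ (a - 1) * Real.exp (-b * x) / Real.Gamma a)) := by
  fun_prop

lemma gammaM_univ {a b : ℝ} (ha : 0 < a) (hb : 0 < b) : gammaM a b Set.univ = 1 := by
  rw [gammaM, withDensity_apply _ MeasurableSet.univ, Measure.restrict_univ]
  have key : ∀ x ∈ Set.Ioi (0:ℝ),
      ENNReal.ofReal (b ^ a * x ^ (a - 1) * Real.exp (-b * x) / Real.Gamma a) =
      ENNReal.ofReal (b ^ a / Real.Gamma a) *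
        ENNReal.ofReal (x ^ (a - 1) * Real.exp (-(b * x))) := by
    intro x hx
    rw [← ENNReal.ofReal_mul (by positivity)]
    congr 1
    rw [neg_mul]
    ring
  rw [setLIntegral_congr_fun measurableSet_Ioi key,
    lintegral_const_mul _ (meas_pow_exp _ _), lint_pow_exp ha hb,
    ← ENNReal.ofReal_mul (by positivity)]
  have h1 : Real.Gamma a ≠ 0 := (Real.Gamma_pos_of_pos ha).ne'
  have h2 : b ^ a ≠ 0 := (Real.rpow_pos_of_pos hb a).ne'
  rw [show b ^ a / Real.Gamma a * (Real.Gamma a / b ^ a) = 1 by field_simp]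
  exact ENNReal.ofReal_one

lemma isProb_gammaM {a b : ℝ} (ha : 0 < a) (hb : 0 < b) :
    IsProbabilityMeasure (gammaM a b) := ⟨gammaM_univ ha hb⟩

lemma gammaM_lint_id {a b : ℝ} (ha : 0 < a) (hb : 0 < b) :
    ∫⁻ x, ENNReal.ofReal x ∂(gammaM a b) < ⊤ := by
  rw [gammaM, lintegral_withDensity_eq_lintegral_mul _ (gammaM_dens_meas a b)
    measurable_ofReal]
  simp only [Pi.mul_apply]
  have key : ∀ x ∈ Set.Ioi (0:ℝ),
      (fun x => ENNReal.ofReal (b ^ a * x ^ (a - 1) * Real.exp (-b * x) / Real.Gamma a)) x *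
        ENNReal.ofReal x =
      ENNReal.ofReal (b ^ a / Real.Gamma a) *
        ENNReal.ofReal (x ^ ((a + 1) - 1) * Real.exp (-(b * x))) := by
    intro x hx
    have hx' : (0:ℝ) < x := hx
    simp only
    rw [← ENNReal.ofReal_mul (by positivity), ← ENNReal.ofReal_mul (by positivity)]
    congr 1
    rw [neg_mul, show (a + 1) - 1 = (a - 1) + 1 by ring, Real.rpow_add hx',
      Real.rpow_one]
    ring
  rw [setLIntegral_congr_fun measurableSet_Ioi key,
    lintegral_const_mul _ (meas_pow_exp _ _), lint_pow_exp (by linarith) hb]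
  exact ENNReal.mul_lt_top ENNReal.ofReal_lt_top ENNReal.ofReal_lt_top

lemma gammaM_ae_pos (a b : ℝ) : ∀ᵐ x ∂(gammaM a b), 0 < x := by
  refine (withDensity_absolutelyContinuous _ _).ae_le ?_
  filter_upwards [ae_restrict_mem measurableSet_Ioi] with x hx using hx

lemma rho0_ae_pos (σ τ : ℝ) : ∀ᵐ w ∂(rho0 σ τ), 0 < w := by
  refine (withDensity_absolutelyContinuous _ _).ae_le ?_
  filter_upwards [ae_restrict_mem measurableSet_Ioi] with x hx using hx

lemma rho0_dens_meas (σ τ : ℝ) :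
    Measurable (fun w : ℝ =>
      ENNReal.ofReal (w ^ (-1 - σ) * Real.exp (-τ * w) / Real.Gamma (1 - σ))) := by
  fun_prop

lemma rho0_lint_id {σ τ : ℝ} (hσ : σ < 1) (hτ : 0 < τ) :
    ∫⁻ w, ENNReal.ofReal w ∂(rho0 σ τ) < ⊤ := by
  rw [rho0, lintegral_withDensity_eq_lintegral_mul _ (rho0_dens_meas σ τ) measurable_ofReal]
  simp only [Pi.mul_apply]
  have key : ∀ w ∈ Set.Ioi (0:ℝ),
      (fun w => ENNReal.ofReal (w ^ (-1 - σ) * Real.exp (-τ * w) / Real.Gamma (1 - σ))) w *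
        ENNReal.ofReal w =
      ENNReal.ofReal (1 / Real.Gamma (1 - σ)) *
        ENNReal.ofReal (w ^ ((1 - σ) - 1) * Real.exp (-(τ * w))) := by
    intro w hw
    have hw' : (0:ℝ) < w := hw
    have hΓ : 0 < Real.Gamma (1 - σ) := Real.Gamma_pos_of_pos (by linarith)
    simp only
    rw [← ENNReal.ofReal_mul (by positivity), ← ENNReal.ofReal_mul (by positivity)]
    congr 1
    rw [neg_mul, show (1 - σ) - 1 = (-1 - σ) + 1 by ring, Real.rpow_add hw', Real.rpow_one]
    ring
  rw [setLIntegral_congr_fun measurableSet_Ioi key,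
    lintegral_const_mul _ (meas_pow_exp _ _), lint_pow_exp (by linarith) hτ]
  exact ENNReal.mul_lt_top ENNReal.ofReal_lt_top ENNReal.ofReal_lt_top

lemma rho0_univ_pos {σ τ : ℝ} (hσ : σ < 1) : 0 < rho0 σ τ Set.univ := by
  rw [rho0, withDensity_apply _ MeasurableSet.univ, Measure.restrict_univ]
  rw [lintegral_pos_iff_support (rho0_dens_meas σ τ)]
  have hsub : Set.Ioi (0:ℝ) ⊆ Function.support
      (fun w => ENNReal.ofReal (w ^ (-1 - σ) * Real.exp (-τ * w) / Real.Gamma (1 - σ))) := by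
    intro w hw
    have hΓ : 0 < Real.Gamma (1 - σ) := Real.Gamma_pos_of_pos (by linarith)
    have hw' : (0:ℝ) < w := hw
    simp only [Function.mem_support, ne_eq, ENNReal.ofReal_eq_zero, not_le]
    positivity
  have h2 : (0:ℝ≥0∞) < (volume : Measure ℝ).restrict (Set.Ioi 0) (Set.Ioi 0) := by
    rw [Measure.restrict_apply_self, Real.volume_Ioi]
    simp
  exact lt_of_lt_of_le h2 (measure_mono hsub)

lemma pi_map_eval {p : ℕ} (m : Fin p → Measure ℝ) [∀ k, IsProbabilityMeasure (m k)]
    (k : Fin p) : (Measure.pi m).map (fun y => y k) = m k := by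
  classical
  ext s hs
  rw [Measure.map_apply (measurable_pi_apply k) hs, Set.eval_preimage, Measure.pi_pi]
  refine Finset.prod_eq_single k (fun j _ hj => ?_) (fun h => absurd (Finset.mem_univ k) h)
    |>.trans ?_
  · rw [Function.update_of_ne hj]
    exact measure_univ
  · rw [Function.update_self]

instance (σ τ : ℝ) : SFinite (rho0 σ τ) := by unfold rho0; infer_instance

lemma one_sub_exp_neg_le (s : ℝ) : 1 - Real.exp (-s) ≤ s := by
  have := Real.add_one_le_exp (-s)
  linarith

/-- For every `T > 0`, `∫ ψ(2Tw₁,…,2Tw_p) ρ(dw)` is finite and strictly positive.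
By `E[E_{α,T}] = (α²/2) ∫ ψ(2Tw) ρ(dw)`, this gives `E[E_{α,T}] = Θ(α²)` as `α → ∞`. -/
theorem edges_integral_finite_positive (σ τ : ℝ) (hσ : σ < 1) (hτ : 0 < τ) (p : ℕ)
    (hp : 1 ≤ p) (a b : Fin p → ℝ) (ha : ∀ k, 0 < a k) (hb : ∀ k, 0 < b k)
    (T : ℝ) (hT : 0 < T) :
    0 < (∫⁻ w, psiE σ τ p a b (fun k => 2 * T * w k) ∂(rhoC σ τ p a b)) ∧
    (∫⁻ w, psiE σ τ p a b (fun k => 2 * T * w k) ∂(rhoC σ τ p a b)) < ⊤ := by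
  classical
  haveI hNE : Nonempty (Fin p) := ⟨⟨0, hp⟩⟩
  haveI hPM : ∀ k : Fin p, IsProbabilityMeasure (gammaM (a k) (b k)) :=
    fun k => isProb_gammaM (ha k) (hb k)
  set ν : Measure (Fin p → ℝ) := Measure.pi fun k => gammaM (a k) (b k) with hνdef
  set P : Measure (ℝ × (Fin p → ℝ)) := (rho0 σ τ).prod ν with hPdef
  have hf : Measurable (fun x : ℝ × (Fin p → ℝ) => fun k => x.1 * x.2 k) :=
    measurable_pi_lambda _ fun k =>
      measurable_fst.mul ((measurable_pi_apply k).comp measurable_snd)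
  have hrhoC : rhoC σ τ p a b
      = P.map (fun x : ℝ × (Fin p → ℝ) => fun k => x.1 * x.2 k) := rfl
  -- a.e. positivity
  have hνpos : ∀ᵐ y ∂ν, ∀ k, 0 < y k :=
    eventually_all.2 fun k => Measure.tendsto_eval_ae_ae.eventually (gammaM_ae_pos _ _)
  have hP_pos : ∀ᵐ x ∂P, 0 < x.1 ∧ ∀ k, 0 < x.2 k :=
    (Measure.quasiMeasurePreserving_fst.tendsto_ae.eventually (rho0_ae_pos σ τ)).and
      (Measure.quasiMeasurePreserving_snd.tendsto_ae.eventually hνpos)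
  have hSmeas : MeasurableSet {v : Fin p → ℝ | ∀ k, 0 < v k} := by
    have : {v : Fin p → ℝ | ∀ k, 0 < v k} = ⋂ k, (fun v : Fin p → ℝ => v k) ⁻¹' Set.Ioi 0 := by
      ext v; simp
    rw [this]
    exact MeasurableSet.iInter fun k => (measurable_pi_apply k) measurableSet_Ioi
  have hrho_pos : ∀ᵐ v ∂(rhoC σ τ p a b), ∀ k, 0 < v k := by
    rw [hrhoC, ae_map_iff hf.aemeasurable hSmeas]
    filter_upwards [hP_pos] with x hx k
    exact mul_pos hx.1 (hx.2 k)
  -- first moments of rhoC are finite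
  have hm : ∀ k, ∫⁻ v, ENNReal.ofReal (v k) ∂(rhoC σ τ p a b) < ⊤ := by
    intro k
    rw [hrhoC, lintegral_map (f := fun v : Fin p → ℝ => ENNReal.ofReal (v k))
      (by fun_prop) hf]
    have heq : ∫⁻ x, ENNReal.ofReal (x.1 * x.2 k) ∂P
        = ∫⁻ x, ENNReal.ofReal x.1 * ENNReal.ofReal (x.2 k) ∂P := by
      refine lintegral_congr_ae ?_
      filter_upwards [hP_pos] with x hx
      rw [ENNReal.ofReal_mul hx.1.le]
    rw [heq, lintegral_prod_mul measurable_ofReal.aemeasurable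
      ((by fun_prop : Measurable fun y : Fin p → ℝ => ENNReal.ofReal (y k)).aemeasurable)]
    have hν_eval : ∫⁻ y, ENNReal.ofReal (y k) ∂ν = ∫⁻ x, ENNReal.ofReal x
        ∂(gammaM (a k) (b k)) := by
      rw [hνdef, ← pi_map_eval (fun k => gammaM (a k) (b k)) k,
        lintegral_map measurable_ofReal (measurable_pi_apply k)]
    rw [hν_eval]
    exact ENNReal.mul_lt_top (rho0_lint_id hσ hτ) (gammaM_lint_id (ha k) (hb k))
  -- psiE as integral over P
  have psiE_eq : ∀ t : Fin p → ℝ, psiE σ τ p a b t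
      = ∫⁻ x : ℝ × (Fin p → ℝ),
          ENNReal.ofReal (1 - Real.exp (-∑ k, t k * (x.1 * x.2 k))) ∂P := by
    intro t
    rw [psiE, hrhoC, lintegral_map (by fun_prop) hf]
  -- measurability of the outer integrand
  have hΦmeas : Measurable
      (fun w : Fin p → ℝ => psiE σ τ p a b (fun k => 2 * T * w k)) := by
    simp_rw [psiE_eq]
    exact Measurable.lintegral_prod_right'
      (f := fun q : (Fin p → ℝ) × (ℝ × (Fin p → ℝ)) =>
        ENNReal.ofReal (1 - Real.exp (-∑ k, 2 * T * q.1 k * (q.2.1 * q.2.2 k))))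
      (by fun_prop)
  -- positivity of rhoC on the positive orthant
  have hC_univ_pos : 0 < rhoC σ τ p a b Set.univ := by
    rw [hrhoC, Measure.map_apply hf MeasurableSet.univ, Set.preimage_univ,
      ← Set.univ_prod_univ, Measure.prod_prod]
    have h1 := rho0_univ_pos (τ := τ) hσ
    have hν1 : ν Set.univ = 1 := measure_univ
    rw [hν1, mul_one]
    exact h1
  have hS_pos : 0 < rhoC σ τ p a b {v : Fin p → ℝ | ∀ k, 0 < v k} := by
    have hcompl : rhoC σ τ p a b ({v : Fin p → ℝ | ∀ k, 0 < v k}ᶜ) = 0 := by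
      have := hrho_pos
      rw [ae_iff] at this
      simpa [Set.compl_setOf] using this
    calc (0:ℝ≥0∞) < rhoC σ τ p a b Set.univ := hC_univ_pos
    _ ≤ rhoC σ τ p a b {v : Fin p → ℝ | ∀ k, 0 < v k}
        + rhoC σ τ p a b ({v : Fin p → ℝ | ∀ k, 0 < v k}ᶜ) := by
        rw [← Set.union_compl_self {v : Fin p → ℝ | ∀ k, 0 < v k}]
        exact measure_union_le _ _
    _ = rhoC σ τ p a b {v : Fin p → ℝ | ∀ k, 0 < v k} := by rw [hcompl, add_zero]
  -- pointwise positivity of psiE on the positive orthant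
  have hψpos : ∀ w ∈ {v : Fin p → ℝ | ∀ k, 0 < v k},
      0 < psiE σ τ p a b (fun k => 2 * T * w k) := by
    intro w hw
    rw [psiE, lintegral_pos_iff_support (by fun_prop)]
    refine lt_of_lt_of_le hS_pos (measure_mono ?_)
    intro v hv
    simp only [Function.mem_support, ne_eq, ENNReal.ofReal_eq_zero, not_le]
    have hsum : 0 < ∑ k, (2 * T * w k) * v k := by
      refine Finset.sum_pos (fun k _ => ?_) Finset.univ_nonempty
      have h1 := hw k
      have h2 := hv k
      positivity
    have hexp : Real.exp (-∑ k, (2 * T * w k) * v k) < 1 :=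
      Real.exp_lt_one_iff.mpr (by linarith)
    linarith
  constructor
  · rw [lintegral_pos_iff_support hΦmeas]
    refine lt_of_lt_of_le hS_pos (measure_mono ?_)
    intro w hw
    exact (hψpos w hw).ne'
  · -- finiteness
    have hvk : ∀ k : Fin p, Measurable (fun v : Fin p → ℝ => ENNReal.ofReal (v k)) :=
      fun k => by fun_prop
    have hbound : ∀ᵐ w ∂(rhoC σ τ p a b), psiE σ τ p a b (fun k => 2 * T * w k)
        ≤ ∑ k, (ENNReal.ofReal (2 * T) * ENNReal.ofReal (w k))
            * ∫⁻ v, ENNReal.ofReal (v k) ∂(rhoC σ τ p a b) := by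
      filter_upwards [hrho_pos] with w hw
      have step1 : psiE σ τ p a b (fun k => 2 * T * w k)
          ≤ ∫⁻ v, ∑ k, ENNReal.ofReal ((2 * T * w k) * v k) ∂(rhoC σ τ p a b) := by
        rw [psiE]
        refine lintegral_mono fun v => ?_
        refine le_trans ?_ (ofReal_sum_le' _ _)
        exact ENNReal.ofReal_le_ofReal (one_sub_exp_neg_le _)
      have step2 : ∫⁻ v, ∑ k, ENNReal.ofReal ((2 * T * w k) * v k) ∂(rhoC σ τ p a b)
          = ∑ k, ∫⁻ v, ENNReal.ofReal ((2 * T * w k) * v k) ∂(rhoC σ τ p a b) :=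
        lintegral_finset_sum _ (fun k _ => by fun_prop)
      have step3 : ∀ k : Fin p, ∫⁻ v, ENNReal.ofReal ((2 * T * w k) * v k) ∂(rhoC σ τ p a b)
          = (ENNReal.ofReal (2 * T) * ENNReal.ofReal (w k))
            * ∫⁻ v, ENNReal.ofReal (v k) ∂(rhoC σ τ p a b) := by
        intro k
        have hwk := hw k
        calc ∫⁻ v, ENNReal.ofReal ((2 * T * w k) * v k) ∂(rhoC σ τ p a b)
            = ∫⁻ v, ENNReal.ofReal (2 * T * w k) * ENNReal.ofReal (v k) ∂(rhoC σ τ p a b) :=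
              lintegral_congr fun v => ENNReal.ofReal_mul (by positivity)
        _ = ENNReal.ofReal (2 * T * w k) * ∫⁻ v, ENNReal.ofReal (v k) ∂(rhoC σ τ p a b) :=
              lintegral_const_mul _ (hvk k)
        _ = (ENNReal.ofReal (2 * T) * ENNReal.ofReal (w k))
              * ∫⁻ v, ENNReal.ofReal (v k) ∂(rhoC σ τ p a b) := by
              rw [ENNReal.ofReal_mul (by positivity)]
      rw [step2] at step1
      exact step1.trans (le_of_eq (Finset.sum_congr rfl fun k _ => step3 k))
    calc ∫⁻ w, psiE σ τ p a b (fun k => 2 * T * w k) ∂(rhoC σ τ p a b)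
        ≤ ∫⁻ w, ∑ k, (ENNReal.ofReal (2 * T) * ENNReal.ofReal (w k))
            * ∫⁻ v, ENNReal.ofReal (v k) ∂(rhoC σ τ p a b) ∂(rhoC σ τ p a b) :=
          lintegral_mono_ae hbound
    _ = ∑ k, (∫⁻ v, ENNReal.ofReal (v k) ∂(rhoC σ τ p a b))
          * (ENNReal.ofReal (2 * T) * ∫⁻ v, ENNReal.ofReal (v k) ∂(rhoC σ τ p a b)) := by
        rw [lintegral_finset_sum _ (fun k _ => by fun_prop)]
        refine Finset.sum_congr rfl fun k _ => ?_
        have : ∀ w : Fin p → ℝ, (ENNReal.ofReal (2 * T) * ENNReal.ofReal (w k))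
            * ∫⁻ v, ENNReal.ofReal (v k) ∂(rhoC σ τ p a b)
            = ((∫⁻ v, ENNReal.ofReal (v k) ∂(rhoC σ τ p a b)) * ENNReal.ofReal (2 * T))
              * ENNReal.ofReal (w k) := fun w => by ring
        simp_rw [this]
        rw [lintegral_const_mul _ (hvk k)]
        ring
    _ < ⊤ := by
        refine ENNReal.sum_lt_top.mpr fun k _ => ?_
        exact ENNReal.mul_lt_top (hm k)
          (ENNReal.mul_lt_top ENNReal.ofReal_lt_top (hm k))
end

section
/- Suppose σ < 0 and fix T > 0. Then lim_{α→∞} ∫_{(0,∞)^p} (1 − e^{−α ψ(2Tw₁,…,2Tw_p)}) ρ(dw) = τ^σ/(−σ), which is finite and strictly positive. Consequently the expected number of nodes E[V_{α,T}] = α ∫ (1 − e^{−α ψ(2Tw)}) ρ(dw) satisfies E[V_{α,T}] = Θ(α) as α → ∞. -/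
open MeasureTheory Real Filter

lemma integrableOn_gk {c r : ℝ} (hc : 0 < c) (hr : 0 < r) :
    IntegrableOn (fun x : ℝ => x ^ (c - 1) * Real.exp (-(r * x))) (Set.Ioi 0) := by
  by_contra h
  have h0 := Real.integral_rpow_mul_exp_neg_mul_Ioi hc hr
  rw [MeasureTheory.integral_undef h] at h0
  have hpos : (0:ℝ) < (1/r) ^ c * Real.Gamma c := by positivity
  rw [← h0] at hpos
  exact lt_irrefl _ hpos

lemma lintegral_gk {c r : ℝ} (hc : 0 < c) (hr : 0 < r) :
    ∫⁻ x in Set.Ioi 0, ENNReal.ofReal (x ^ (c - 1) * Real.exp (-(r * x))) =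
      ENNReal.ofReal ((1/r) ^ c * Real.Gamma c) := by
  rw [← Real.integral_rpow_mul_exp_neg_mul_Ioi hc hr,
    ← ofReal_integral_eq_lintegral_ofReal (integrableOn_gk hc hr)]
  exact (ae_restrict_iff' measurableSet_Ioi).mpr (ae_of_all _ fun x hx => by
    have : (0:ℝ) < x := hx
    positivity)

lemma lintegral_gk_scaled {c r q : ℝ} (hc : 0 < c) (hr : 0 < r) (hq : 0 ≤ q) :
    ∫⁻ x in Set.Ioi 0, ENNReal.ofReal (q * (x ^ (c - 1) * Real.exp (-(r * x)))) =
      ENNReal.ofReal q * ENNReal.ofReal ((1/r) ^ c * Real.Gamma c) := by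
  simp_rw [ENNReal.ofReal_mul hq]
  rw [lintegral_const_mul' _ _ ENNReal.ofReal_ne_top, lintegral_gk hc hr]

lemma gammaM_univ_s13 {c r : ℝ} (hc : 0 < c) (hr : 0 < r) : gammaM c r Set.univ = 1 := by
  rw [gammaM, withDensity_apply _ MeasurableSet.univ, Measure.restrict_univ]
  have heq : ∀ x : ℝ, (ENNReal.ofReal (r ^ c * x ^ (c - 1) * Real.exp (-r * x) / Real.Gamma c))
      = ENNReal.ofReal ((r ^ c / Real.Gamma c) * (x ^ (c - 1) * Real.exp (-(r * x)))) := by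
    intro x; rw [neg_mul]; ring_nf
  simp_rw [heq]
  rw [lintegral_gk_scaled hc hr (by positivity)]
  rw [← ENNReal.ofReal_mul (by positivity)]
  rw [show r ^ c / Real.Gamma c * ((1/r) ^ c * Real.Gamma c)
      = (r ^ c * (1/r) ^ c) * (Real.Gamma c / Real.Gamma c) by ring]
  rw [div_self (Real.Gamma_pos_of_pos hc).ne', ← Real.mul_rpow hr.le (by positivity),
    mul_one_div_cancel hr.ne', Real.one_rpow, mul_one, ENNReal.ofReal_one]

lemma rho0_univ {σ τ : ℝ} (hσ : σ < 0) (hτ : 0 < τ) :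
    rho0 σ τ Set.univ = ENNReal.ofReal (τ ^ σ / (-σ)) := by
  rw [rho0, withDensity_apply _ MeasurableSet.univ, Measure.restrict_univ]
  have heq : ∀ w : ℝ, (ENNReal.ofReal (w ^ (-1 - σ) * Real.exp (-τ * w) / Real.Gamma (1 - σ)))
      = ENNReal.ofReal ((1 / Real.Gamma (1 - σ)) * (w ^ (-σ - 1) * Real.exp (-(τ * w)))) := by
    intro w; rw [neg_mul, show (-1 - σ : ℝ) = -σ - 1 by ring]; ring_nf
  have h1G : 0 < Real.Gamma (1 - σ) := Real.Gamma_pos_of_pos (by linarith)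
  simp_rw [heq]
  rw [lintegral_gk_scaled (by linarith) hτ (by positivity)]
  rw [← ENNReal.ofReal_mul (by positivity)]
  congr 1
  have hG : Real.Gamma (1 - σ) = -σ * Real.Gamma (-σ) := by
    rw [show (1 - σ : ℝ) = -σ + 1 by ring, Real.Gamma_add_one (by linarith)]
  have hGpos : 0 < Real.Gamma (-σ) := Real.Gamma_pos_of_pos (by linarith)
  have hpow : (1/τ) ^ (-σ) = (τ ^ σ)⁻¹⁻¹ := by
    rw [one_div, Real.inv_rpow hτ.le, Real.rpow_neg hτ.le]
  rw [hG, hpow, inv_inv]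
  rw [show 1 / (-σ * Real.Gamma (-σ)) * (τ ^ σ * Real.Gamma (-σ))
      = (Real.Gamma (-σ) / Real.Gamma (-σ)) * (τ ^ σ / (-σ)) by ring,
    div_self hGpos.ne', one_mul]

/-- The Laplace exponent `ψ(t) = ∫ (1 − e^{−Σ_k t_k v_k}) ρ(dv)` of the compound CRM
(a finite quantity, expressed here as a Bochner integral). -/
noncomputable def psi (σ τ : ℝ) (p : ℕ) (a b : Fin p → ℝ) (t : Fin p → ℝ) : ℝ :=
  ∫ v, (1 - Real.exp (-∑ k, t k * v k)) ∂(rhoC σ τ p a b)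

/-- `∫ (1 − e^{−α ψ(2Tw₁,…,2Tw_p)}) ρ(dw)`, so that `E[V_{α,T}]` equals `α` times this. -/
noncomputable def nodesIntegral (σ τ : ℝ) (p : ℕ) (a b : Fin p → ℝ) (α T : ℝ) : ℝ :=
  ∫ w, (1 - Real.exp (-α * psi σ τ p a b (fun k => 2 * T * w k))) ∂(rhoC σ τ p a b)

/-- For `σ < 0` and fixed `T > 0`,
`∫ (1 − e^{−α ψ(2Tw)}) ρ(dw) → τ^σ/(−σ)` as `α → ∞`, a finite strictly positive limit;
consequently `E[V_{α,T}] = α ∫ (1 − e^{−α ψ(2Tw)}) ρ(dw) = Θ(α)` as `α → ∞`. -/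
theorem nodes_dense_regime (σ τ : ℝ) (hσ : σ < 0) (hτ : 0 < τ) (p : ℕ) (hp : 1 ≤ p)
    (a b : Fin p → ℝ) (ha : ∀ k, 0 < a k) (hb : ∀ k, 0 < b k) (T : ℝ) (hT : 0 < T) :
    Tendsto (fun α : ℝ => nodesIntegral σ τ p a b α T) atTop (nhds (τ ^ σ / (-σ))) ∧
    0 < τ ^ σ / (-σ) ∧
    ∃ c₁ c₂ : ℝ, 0 < c₁ ∧ c₁ ≤ c₂ ∧ ∀ᶠ α : ℝ in atTop,
      c₁ * α ≤ α * nodesIntegral σ τ p a b α T ∧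
      α * nodesIntegral σ τ p a b α T ≤ c₂ * α := by
  haveI : Nonempty (Fin p) := Fin.pos_iff_nonempty.mp hp
  set L : ℝ := τ ^ σ / (-σ) with hLdef
  have hLpos : 0 < L := div_pos (Real.rpow_pos_of_pos hτ σ) (by linarith)
  -- finiteness instances
  haveI h0fin : IsFiniteMeasure (rho0 σ τ) :=
    ⟨by rw [rho0_univ hσ hτ]; exact ENNReal.ofReal_lt_top⟩
  haveI hgprob : ∀ k, IsProbabilityMeasure (gammaM (a k) (b k)) :=
    fun k => ⟨gammaM_univ_s13 (ha k) (hb k)⟩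
  -- measurability of the multiplication map
  have hmeas : Measurable (fun x : ℝ × (Fin p → ℝ) => fun k => x.1 * x.2 k) :=
    measurable_pi_lambda _ fun k =>
      measurable_fst.mul ((measurable_pi_apply k).comp measurable_snd)
  haveI hCfin : IsFiniteMeasure (rhoC σ τ p a b) := by
    constructor
    rw [rhoC, Measure.map_apply hmeas MeasurableSet.univ, Set.preimage_univ,
      ← Set.univ_prod_univ, Measure.prod_prod]
    have hpi : (Measure.pi fun k => gammaM (a k) (b k)) Set.univ = 1 := measure_univ
    rw [hpi, mul_one, rho0_univ hσ hτ]
    exact ENNReal.ofReal_lt_top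
  -- mass of rhoC
  have hmass : rhoC σ τ p a b Set.univ = ENNReal.ofReal L := by
    rw [rhoC, Measure.map_apply hmeas MeasurableSet.univ, Set.preimage_univ,
      ← Set.univ_prod_univ, Measure.prod_prod]
    have hpi : (Measure.pi fun k => gammaM (a k) (b k)) Set.univ = 1 := measure_univ
    rw [hpi, mul_one, rho0_univ hσ hτ]
  -- a.e. positivity of coordinates
  have hae0 : ∀ᵐ w ∂(rho0 σ τ), 0 < w := by
    have h1 : ∀ᵐ w ∂((volume : Measure ℝ).restrict (Set.Ioi 0)), 0 < w :=
      ae_restrict_mem measurableSet_Ioi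
    exact (withDensity_absolutelyContinuous _ _).ae_le h1
  have haeg : ∀ k, ∀ᵐ x ∂(gammaM (a k) (b k)), 0 < x := by
    intro k
    have h1 : ∀ᵐ x ∂((volume : Measure ℝ).restrict (Set.Ioi 0)), 0 < x :=
      ae_restrict_mem measurableSet_Ioi
    exact (withDensity_absolutelyContinuous _ _).ae_le h1
  have haepi : ∀ᵐ x ∂(Measure.pi fun k => gammaM (a k) (b k)), ∀ k, 0 < x k := by
    rw [ae_all_iff]
    intro k
    rw [ae_iff]
    have : {x : Fin p → ℝ | ¬ 0 < x k} = Function.eval k ⁻¹' {y : ℝ | ¬ 0 < y} := rfl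
    rw [this]
    exact Measure.pi_eval_preimage_null _ (by rw [← ae_iff]; exact haeg k)
  have haeprod : ∀ᵐ x ∂((rho0 σ τ).prod (Measure.pi fun k => gammaM (a k) (b k))),
      0 < x.1 ∧ ∀ k, 0 < x.2 k :=
    (Measure.quasiMeasurePreserving_fst.ae hae0).and
      (Measure.quasiMeasurePreserving_snd.ae haepi)
  have haeC : ∀ᵐ w ∂(rhoC σ τ p a b), ∀ k, 0 < w k := by
    have hms : MeasurableSet {w : Fin p → ℝ | ∀ k, 0 < w k} := by
      have : {w : Fin p → ℝ | ∀ k, 0 < w k} = Set.pi Set.univ (fun _ => Set.Ioi 0) := by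
        ext w; simp [Set.mem_pi]
      rw [this]
      exact MeasurableSet.univ_pi fun _ => measurableSet_Ioi
    rw [rhoC, ae_map_iff hmeas.aemeasurable hms]
    filter_upwards [haeprod] with x hx k
    exact mul_pos hx.1 (hx.2 k)
  -- psi is positive on positive vectors
  have hψ_pos : ∀ t : Fin p → ℝ, (∀ k, 0 < t k) → 0 < psi σ τ p a b t := by
    intro t ht
    have hfm : StronglyMeasurable fun v : Fin p → ℝ => 1 - Real.exp (-∑ k, t k * v k) := by
      apply Continuous.stronglyMeasurable
      exact continuous_const.sub (((continuous_finset_sum _ fun k _ =>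
        (continuous_const.mul (continuous_apply k))).neg).rexp)
    have hint : Integrable (fun v : Fin p → ℝ => 1 - Real.exp (-∑ k, t k * v k))
        (rhoC σ τ p a b) := by
      apply Integrable.mono' (integrable_const (1:ℝ)) hfm.aestronglyMeasurable
      filter_upwards [haeC] with v hv
      have hs : 0 ≤ ∑ k, t k * v k :=
        Finset.sum_nonneg fun k _ => (mul_pos (ht k) (hv k)).le
      have he1 : Real.exp (-∑ k, t k * v k) ≤ 1 := Real.exp_le_one_iff.mpr (by linarith)
      have he0 : 0 < Real.exp (-∑ k, t k * v k) := Real.exp_pos _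
      rw [Real.norm_eq_abs, abs_le]
      constructor <;> linarith
    have hnn : 0 ≤ᵐ[rhoC σ τ p a b] fun v : Fin p → ℝ => 1 - Real.exp (-∑ k, t k * v k) := by
      filter_upwards [haeC] with v hv
      have hs : 0 ≤ ∑ k, t k * v k :=
        Finset.sum_nonneg fun k _ => (mul_pos (ht k) (hv k)).le
      have he1 : Real.exp (-∑ k, t k * v k) ≤ 1 := Real.exp_le_one_iff.mpr (by linarith)
      simp only [Pi.zero_apply]; linarith
    rw [psi]
    rw [integral_pos_iff_support_of_nonneg_ae hnn hint]
    have hsupp : ∀ᵐ v ∂(rhoC σ τ p a b),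
        v ∈ Function.support fun v : Fin p → ℝ => 1 - Real.exp (-∑ k, t k * v k) := by
      filter_upwards [haeC] with v hv
      have hs : 0 < ∑ k, t k * v k :=
        Finset.sum_pos (fun k _ => mul_pos (ht k) (hv k)) Finset.univ_nonempty
      have he1 : Real.exp (-∑ k, t k * v k) < 1 := Real.exp_lt_one_iff.mpr (by linarith)
      simp only [Function.mem_support]
      intro hcontra
      nlinarith
    have heq2 : (rhoC σ τ p a b) (Function.support
        fun v : Fin p → ℝ => 1 - Real.exp (-∑ k, t k * v k)) = ENNReal.ofReal L := by
      have h5 : (rhoC σ τ p a b) (Function.support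
          fun v : Fin p → ℝ => 1 - Real.exp (-∑ k, t k * v k)) = (rhoC σ τ p a b) Set.univ :=
        measure_congr (Filter.eventuallyEq_univ.mpr hsupp)
      rw [h5, hmass]
    rw [heq2]
    exact ENNReal.ofReal_pos.mpr hLpos
  -- measurability of psi and of the integrands
  have hcont : Continuous (fun q : (Fin p → ℝ) × (Fin p → ℝ) =>
      1 - Real.exp (-∑ k, q.1 k * q.2 k)) := by
    exact continuous_const.sub (((continuous_finset_sum _ fun k _ =>
      ((continuous_apply k).comp continuous_fst).mul
        ((continuous_apply k).comp continuous_snd)).neg).rexp)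
  have hψmeas : StronglyMeasurable (psi σ τ p a b) :=
    hcont.stronglyMeasurable.integral_prod_right'
  have hg_meas : StronglyMeasurable (fun w : Fin p → ℝ =>
      psi σ τ p a b (fun k => 2 * T * w k)) :=
    hψmeas.comp_measurable
      (measurable_pi_lambda _ fun k => (measurable_pi_apply k).const_mul _)
  have hg_pos : ∀ᵐ w ∂(rhoC σ τ p a b), 0 < psi σ τ p a b (fun k => 2 * T * w k) := by
    filter_upwards [haeC] with w hw
    exact hψ_pos _ fun k => by have := hw k; positivity
  -- the main limit via dominated convergence
  have hlim : Tendsto (fun α : ℝ => nodesIntegral σ τ p a b α T) atTop (nhds L) := by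
    have hconst : (∫ _ : Fin p → ℝ, (1:ℝ) ∂(rhoC σ τ p a b)) = L := by
      rw [integral_const, measureReal_def, hmass, smul_eq_mul, mul_one, ENNReal.toReal_ofReal hLpos.le]
    have h1 : Tendsto (fun α : ℝ => ∫ w,
        (1 - Real.exp (-α * psi σ τ p a b (fun k => 2 * T * w k))) ∂(rhoC σ τ p a b))
        atTop (nhds (∫ _ : Fin p → ℝ, (1:ℝ) ∂(rhoC σ τ p a b))) := by
      apply tendsto_integral_filter_of_dominated_convergence (fun _ => (1:ℝ))
      · apply Eventually.of_forall
        intro α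
        exact (stronglyMeasurable_const.sub (Real.continuous_exp.comp_stronglyMeasurable
          (hg_meas.const_mul (-α)))).aestronglyMeasurable
      · filter_upwards [eventually_ge_atTop (0:ℝ)] with α hα
        filter_upwards [hg_pos] with w hw
        have hle : -α * psi σ τ p a b (fun k => 2 * T * w k) ≤ 0 := by nlinarith
        have he1 : Real.exp (-α * psi σ τ p a b (fun k => 2 * T * w k)) ≤ 1 :=
          Real.exp_le_one_iff.mpr hle
        have he0 : 0 < Real.exp (-α * psi σ τ p a b (fun k => 2 * T * w k)) := Real.exp_pos _
        rw [Real.norm_eq_abs, abs_le]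
        constructor <;> linarith
      · exact integrable_const 1
      · filter_upwards [hg_pos] with w hw
        have h2 : Tendsto (fun α : ℝ => -α * psi σ τ p a b (fun k => 2 * T * w k))
            atTop atBot := by
          have h3 : Tendsto (fun α : ℝ => α * -(psi σ τ p a b (fun k => 2 * T * w k)))
              atTop atBot := tendsto_id.atTop_mul_const_of_neg (by linarith)
          convert h3 using 2 with α
          ring
        have h4 := Real.tendsto_exp_atBot.comp h2
        have h5 : Tendsto (fun α : ℝ =>
            1 - Real.exp (-α * psi σ τ p a b (fun k => 2 * T * w k))) atTop (nhds (1 - 0)) :=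
          (tendsto_const_nhds (x := (1:ℝ))).sub h4
        simpa using h5
    rw [hconst] at h1
    exact h1
  refine ⟨hlim, hLpos, L/2, L+1, by linarith, by linarith, ?_⟩
  have hev : ∀ᶠ α : ℝ in atTop,
      nodesIntegral σ τ p a b α T ∈ Set.Ioo (L/2) (L+1) :=
    hlim (Ioo_mem_nhds (by linarith) (by linarith))
  filter_upwards [hev, eventually_ge_atTop (0:ℝ)] with α hα hα0
  constructor
  · nlinarith [hα.1, hα.2]
  · nlinarith [hα.1, hα.2]
end
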